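/- arXiv:1606.09065 — 6 statements merged into one kernel-verified Lean document; each statement's English description precedes it below -/
import Mathlib

section
/- The PSD rank of the n×n identity matrix equals n. -/
open Matrix

lemma trace_conjT_mul_self_eq_zero {k : ℕ} {M : Matrix (Fin k) (Fin k) ℝ}
    (h : (Mᴴ * M).trace = 0) : M = 0 := by
  ext i j
  have hnn : ∀ p : Fin k, 0 ≤ (Mᴴ * M) p p := by
    intro p
    simp only [Matrix.mul_apply, Matrix.conjTranspose_apply, RCLike.star_def]
    exact Finset.sum_nonneg fun q _ => by simpa using mul_self_nonneg (M q p)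
  have := (Finset.sum_eq_zero_iff_of_nonneg (fun p _ => hnn p)).mp h j (Finset.mem_univ j)
  simp only [Matrix.mul_apply, Matrix.conjTranspose_apply] at this
  have := (Finset.sum_eq_zero_iff_of_nonneg
    (fun q _ => by simpa using mul_self_nonneg (M q j))).mp this i (Finset.mem_univ i)
  simpa [mul_self_eq_zero] using this

lemma psd_mul_eq_zero_of_trace {k : ℕ} {B C : Matrix (Fin k) (Fin k) ℝ}
    (hB : B.PosSemidef) (hC : C.PosSemidef) (h : (B * C).trace = 0) : B * C = 0 := by
  obtain ⟨P, rfl⟩ : ∃ P : Matrix (Fin k) (Fin k) ℝ, B = Pᴴ * P := by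
    open scoped MatrixOrder in exact CStarAlgebra.nonneg_iff_eq_star_mul_self.mp hB.nonneg
  obtain ⟨Q, rfl⟩ : ∃ Q : Matrix (Fin k) (Fin k) ℝ, C = Qᴴ * Q := by
    open scoped MatrixOrder in exact CStarAlgebra.nonneg_iff_eq_star_mul_self.mp hC.nonneg
  have key : Q * Pᴴ = 0 := by
    apply trace_conjT_mul_self_eq_zero
    have : ((Q * Pᴴ)ᴴ * (Q * Pᴴ)).trace = (Pᴴ * P * (Qᴴ * Q)).trace := by
      rw [conjTranspose_mul, conjTranspose_conjTranspose,
        Matrix.trace_mul_comm (P * Qᴴ) (Q * Pᴴ),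
        show (Q * Pᴴ) * (P * Qᴴ) = Q * ((Pᴴ * P) * Qᴴ) by noncomm_ring,
        Matrix.trace_mul_comm Q ((Pᴴ * P) * Qᴴ),
        show (Pᴴ * P) * Qᴴ * Q = Pᴴ * P * (Qᴴ * Q) by noncomm_ring]
    rw [this, h]
  calc Pᴴ * P * (Qᴴ * Q) = Pᴴ * (Q * Pᴴ)ᴴ * Q := by
        rw [conjTranspose_mul, conjTranspose_conjTranspose]; noncomm_ring
    _ = 0 := by rw [key]; simp

noncomputable def PsdRank {α β : Type} [Fintype α] [Fintype β] (A : Matrix α β ℝ) : ℕ :=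
  sInf {k : ℕ | ∃ (B : α → Matrix (Fin k) (Fin k) ℝ) (C : β → Matrix (Fin k) (Fin k) ℝ),
    (∀ i, (B i).PosSemidef) ∧ (∀ j, (C j).PosSemidef) ∧ ∀ i j, A i j = ((B i) * (C j)).trace}

theorem psdRank_identity (n : ℕ) : PsdRank (1 : Matrix (Fin n) (Fin n) ℝ) = n := by
  have hmem : n ∈ {k : ℕ | ∃ (B : Fin n → Matrix (Fin k) (Fin k) ℝ)
      (C : Fin n → Matrix (Fin k) (Fin k) ℝ),
      (∀ i, (B i).PosSemidef) ∧ (∀ j, (C j).PosSemidef) ∧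
      ∀ i j, (1 : Matrix (Fin n) (Fin n) ℝ) i j = ((B i) * (C j)).trace} := by
    refine ⟨fun i => Matrix.diagonal (Pi.single i 1),
      fun i => Matrix.diagonal (Pi.single i 1), ?_, ?_, ?_⟩
    · intro i
      exact Matrix.posSemidef_diagonal_iff.mpr fun j => by
        rcases eq_or_ne i j with rfl | h <;> simp [Pi.single_apply, *]
    · intro i
      exact Matrix.posSemidef_diagonal_iff.mpr fun j => by
        rcases eq_or_ne i j with rfl | h <;> simp [Pi.single_apply, *]
    · intro i j
      rw [Matrix.diagonal_mul_diagonal, Matrix.trace_diagonal]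
      rcases eq_or_ne i j with rfl | h
      · simp [Matrix.one_apply, Pi.single_apply]
      · simp [Matrix.one_apply, Pi.single_apply, h, Ne.symm h]
  refine le_antisymm (Nat.sInf_le hmem) (le_csInf ⟨n, hmem⟩ ?_)
  rintro k ⟨B, C, hB, hC, hBC⟩
  -- For each i, B i * C i ≠ 0; pick a nonzero column.
  have hdiag : ∀ i, (B i * C i).trace = 1 := fun i => by
    simpa [Matrix.one_apply] using (hBC i i).symm
  have hoff : ∀ i j, i ≠ j → B i * C j = 0 := by
    intro i j hij
    refine psd_mul_eq_zero_of_trace (hB i) (hC j) ?_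
    simpa [Matrix.one_apply, hij] using (hBC i j).symm
  have hne : ∀ i, B i * C i ≠ 0 := by
    intro i h
    have := hdiag i
    rw [h] at this
    simp at this
  -- choose nonzero entry of B i * C i
  have hcol : ∀ i : Fin n, ∃ q : Fin k, C i *ᵥ Pi.single q 1 ≠ 0 ∧
      B i *ᵥ (C i *ᵥ Pi.single q 1) ≠ 0 := by
    intro i
    have : ∃ p q, (B i * C i) p q ≠ 0 := by
      by_contra h
      push_neg at h
      exact hne i (Matrix.ext fun p q => h p q)
    obtain ⟨p, q, hpq⟩ := this
    refine ⟨q, ?_, ?_⟩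
    · intro h
      apply hpq
      have : B i *ᵥ (C i *ᵥ Pi.single q 1) = 0 := by rw [h]; simp
      rw [Matrix.mulVec_mulVec] at this
      simpa using congrFun this p
    · intro h
      apply hpq
      rw [Matrix.mulVec_mulVec] at h
      simpa using congrFun h p
  choose q hq1 hq2 using hcol
  set v : Fin n → (Fin k → ℝ) := fun i => C i *ᵥ Pi.single (q i) 1 with hv
  have hli : LinearIndependent ℝ v := by
    rw [Fintype.linearIndependent_iff]
    intro g hg i
    have h0 : B i *ᵥ (∑ j, g j • v j) = 0 := by rw [hg]; simp
    have hsum : B i *ᵥ (∑ j, g j • v j) = ∑ j, g j • (B i *ᵥ v j) := by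
      simp only [← Matrix.mulVecLin_apply, map_sum, _root_.map_smul]
    have hzero : ∀ j, j ≠ i → B i *ᵥ v j = 0 := by
      intro j hj
      rw [hv]
      simp only [Matrix.mulVec_mulVec]
      rw [hoff i j (Ne.symm hj)]
      exact Matrix.zero_mulVec _
    rw [hsum, Finset.sum_eq_single i (fun j _ hj => by rw [hzero j hj, smul_zero])
      (fun h => absurd (Finset.mem_univ i) h)] at h0
    rcases smul_eq_zero.mp h0 with h | h
    · exact h
    · exact absurd h (hq2 i)
  have := hli.fintype_card_le_finrank
  simpa [Module.finrank_fin_fun] using this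
end

section
/- For any real matrix A, the PSD rank of the entrywise (Hadamard) square A∘A is at most the ordinary rank of A. -/
open Matrix

lemma posSemidef_vecMulVec_self {k : ℕ} (u : Fin k → ℝ) :
    (vecMulVec u u).PosSemidef := by
  rw [posSemidef_iff_dotProduct_mulVec]
  constructor
  · ext i j
    simp [vecMulVec, conjTranspose, mul_comm]
  · intro x
    have h : star x ⬝ᵥ (vecMulVec u u) *ᵥ x = (u ⬝ᵥ x) * (u ⬝ᵥ x) := by
      simp only [vecMulVec, dotProduct, mulVec, of_apply, star_trivial]
      rw [Finset.sum_mul_sum]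
      simp only [Finset.mul_sum]
      refine Finset.sum_congr rfl fun i _ => Finset.sum_congr rfl fun j _ => by ring
    rw [h]
    exact mul_self_nonneg _

lemma trace_vecMulVec_mul_vecMulVec {k : ℕ} (u v : Fin k → ℝ) :
    ((vecMulVec u u) * (vecMulVec v v)).trace = (u ⬝ᵥ v) ^ 2 := by
  simp only [trace, diag, mul_apply, vecMulVec, of_apply, dotProduct]
  rw [sq, Finset.sum_mul_sum]
  refine Finset.sum_congr rfl fun i _ => Finset.sum_congr rfl fun j _ => by ring

theorem psdRank_hadamard_sq_le_rank {m n : ℕ} (A : Matrix (Fin m) (Fin n) ℝ) :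
    PsdRank (Matrix.of fun i j => (A i j) ^ 2) ≤ A.rank := by
  set r := A.rank with hr
  -- basis of the range of A
  have : FiniteDimensional ℝ (LinearMap.range A.mulVecLin) := by infer_instance
  have hdim : Module.finrank ℝ (LinearMap.range A.mulVecLin) = r := rfl
  let b : Module.Basis (Fin r) ℝ (LinearMap.range A.mulVecLin) := by
    rw [← hdim]; exact Module.finBasis ℝ _
  let c : Fin n → (LinearMap.range A.mulVecLin) := fun j =>
    ⟨A.mulVecLin (Pi.single j 1), LinearMap.mem_range_self _ _⟩
  let u : Fin m → Fin r → ℝ := fun i k => (b k : Fin m → ℝ) i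
  let v : Fin n → Fin r → ℝ := fun j k => b.repr (c j) k
  have key : ∀ i j, A i j = u i ⬝ᵥ v j := by
    intro i j
    have h1 : (c j : Fin m → ℝ) i = A i j := by
      simp [c, mulVecLin_apply, mulVec_single]
    have h2 : (c j : Fin m → ℝ) = ∑ k, b.repr (c j) k • (b k : Fin m → ℝ) := by
      conv_lhs => rw [← b.sum_repr (c j)]
      push_cast [Submodule.coe_sum]
      rfl
    rw [← h1, h2]
    simp [dotProduct, u, v, mul_comm]
  apply Nat.sInf_le
  refine ⟨fun i => vecMulVec (u i) (u i), fun j => vecMulVec (v j) (v j),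
    fun i => posSemidef_vecMulVec_self _, fun j => posSemidef_vecMulVec_self _, ?_⟩
  intro i j
  rw [trace_vecMulVec_mul_vecMulVec, of_apply, key i j]
end

section
/- For nonnegative matrices A, B, C of compatible sizes, the block matrix [[A, B], [0, C]] has PSD rank at least PSD rank(A) + PSD rank(C). -/
open Matrix

/-- A real matrix with `(Xᵀ * X).trace = 0` is zero. -/
lemma trace_transpose_mul_self_eq_zero_aux {m n : ℕ} {X : Matrix (Fin m) (Fin n) ℝ}
    (h : (Xᵀ * X).trace = 0) : X = 0 := by
  have h' : ∑ j, ∑ i, X i j ^ 2 = 0 := by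
    simpa [Matrix.trace, Matrix.diag, Matrix.mul_apply, sq] using h
  ext i j
  have h1 := (Finset.sum_eq_zero_iff_of_nonneg
    (fun j _ => Finset.sum_nonneg fun i _ => sq_nonneg (X i j))).mp h' j (Finset.mem_univ j)
  have h2 := (Finset.sum_eq_zero_iff_of_nonneg
    (fun i _ => sq_nonneg (X i j))).mp h1 i (Finset.mem_univ i)
  simpa using pow_eq_zero_iff (n := 2) (by norm_num) |>.mp h2

open scoped MatrixOrder in
/-- Two PSD matrices whose product has trace zero multiply to zero. -/
lemma psd_mul_eq_zero_of_trace_eq_zero {k : ℕ} {P Q : Matrix (Fin k) (Fin k) ℝ}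
    (hP : P.PosSemidef) (hQ : Q.PosSemidef) (h : (P * Q).trace = 0) : P * Q = 0 := by
  set S := CFC.sqrt P with hSdef
  set T := CFC.sqrt Q with hTdef
  have hS : S * S = P := CFC.sqrt_mul_sqrt_self P hP.nonneg
  have hT : T * T = Q := CFC.sqrt_mul_sqrt_self Q hQ.nonneg
  have hSH : Sᴴ = S := (CFC.sqrt_nonneg P).posSemidef.isHermitian
  have hTH : Tᴴ = T := (CFC.sqrt_nonneg Q).posSemidef.isHermitian
  have e1 : (T * S)ᵀ * (T * S) = S * (Q * S) := by
    rw [← conjTranspose_eq_transpose_of_trivial]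
    calc (T * S)ᴴ * (T * S) = S * (T * (T * S)) := by
          rw [conjTranspose_mul, hSH, hTH, Matrix.mul_assoc]
      _ = S * ((T * T) * S) := by rw [Matrix.mul_assoc]
      _ = S * (Q * S) := by rw [hT]
  have e2 : (S * (Q * S)).trace = (P * Q).trace := by
    rw [Matrix.trace_mul_comm, Matrix.mul_assoc, hS, Matrix.trace_mul_comm]
  have hTS : T * S = 0 := by
    apply trace_transpose_mul_self_eq_zero_aux
    rw [e1, e2, h]
  have hSt : Sᵀ = S := by rw [← conjTranspose_eq_transpose_of_trivial]; exact hSH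
  have hTt : Tᵀ = T := by rw [← conjTranspose_eq_transpose_of_trivial]; exact hTH
  have hST : S * T = 0 := by
    have := congrArg Matrix.transpose hTS
    rwa [Matrix.transpose_mul, hSt, hTt, Matrix.transpose_zero] at this
  calc P * Q = S * (S * T) * T := by
        rw [← hS, ← hT]; simp only [Matrix.mul_assoc]
    _ = 0 := by rw [hST]; simp

/-- Applying a finite sum of Euclidean vectors at a coordinate. -/
lemma euclid_sum_apply {ι : Type*} {k : ℕ} (s : Finset ι)
    (f : ι → EuclideanSpace ℝ (Fin k)) (i : Fin k) :
    (∑ a ∈ s, f a) i = ∑ a ∈ s, f a i := by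
  classical
  induction s using Finset.induction with
  | empty => simp
  | insert _ _ h ih => simp [Finset.sum_insert h, ih]

/-- Compression lemma: if all the `P i` have range inside a subspace `V`, then the
trace products `tr (P i * Q j)` can be realized by PSD matrices of size `finrank V`. -/
lemma compress {α β : Type} [Fintype α] [Fintype β] {k : ℕ}
    (P : α → Matrix (Fin k) (Fin k) ℝ) (Q : β → Matrix (Fin k) (Fin k) ℝ)
    (hP : ∀ i, (P i).PosSemidef) (hQ : ∀ j, (Q j).PosSemidef)
    (V : Submodule ℝ (EuclideanSpace ℝ (Fin k)))
    (hmem : ∀ i (y : Fin k → ℝ), (WithLp.toLp 2 ((P i).mulVec y) : EuclideanSpace ℝ (Fin k)) ∈ V) :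
    ∃ (P' : α → Matrix (Fin (Module.finrank ℝ V)) (Fin (Module.finrank ℝ V)) ℝ)
      (Q' : β → Matrix (Fin (Module.finrank ℝ V)) (Fin (Module.finrank ℝ V)) ℝ),
      (∀ i, (P' i).PosSemidef) ∧ (∀ j, (Q' j).PosSemidef) ∧
      ∀ i j, ((P' i) * (Q' j)).trace = ((P i) * (Q j)).trace := by
  classical
  set d := Module.finrank ℝ V with hd
  let b : OrthonormalBasis (Fin d) ℝ V := stdOrthonormalBasis ℝ V
  let U : Matrix (Fin k) (Fin d) ℝ := Matrix.of fun x a => (b a : EuclideanSpace ℝ (Fin k)) x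
  have hproj : ∀ x : EuclideanSpace ℝ (Fin k), x ∈ V → (U * Uᵀ) *ᵥ x = x := by
    intro x hx
    rw [← Matrix.mulVec_mulVec]
    have hrep : Uᵀ *ᵥ x = fun a => b.repr ⟨x, hx⟩ a := by
      funext a
      have : (b.repr ⟨x, hx⟩) a = inner ℝ (b a) (⟨x, hx⟩ : V) := b.repr_apply_apply _ _
      rw [this]
      simp [Matrix.mulVec, dotProduct, U, Submodule.coe_inner, PiLp.inner_apply,
        RCLike.inner_apply, Matrix.transpose_apply, mul_comm]
    rw [hrep]
    have hrepr := b.sum_repr ⟨x, hx⟩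
    funext i
    have h2 : ((∑ a, b.repr ⟨x, hx⟩ a • b a : V) : EuclideanSpace ℝ (Fin k)) i = x i := by
      rw [hrepr]
    rw [AddSubmonoidClass.coe_finset_sum, euclid_sum_apply] at h2
    simp only [SetLike.val_smul, PiLp.smul_apply, smul_eq_mul] at h2
    simpa [Matrix.mulVec, dotProduct, U, mul_comm] using h2
  have hProjP : ∀ i, (U * Uᵀ) * P i = P i := by
    intro i
    ext x y
    have hcol := hproj _ (hmem i (Pi.single y 1))
    rw [Matrix.mulVec_mulVec] at hcol
    have := congrFun hcol x
    simpa [Matrix.mulVec_single] using this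
  have hPProj : ∀ i, P i * (U * Uᵀ) = P i := by
    intro i
    have hsym : (P i)ᵀ = P i := by
      rw [← conjTranspose_eq_transpose_of_trivial]; exact (hP i).isHermitian
    have := congrArg Matrix.transpose (hProjP i)
    rwa [Matrix.transpose_mul, Matrix.transpose_mul, Matrix.transpose_transpose, hsym] at this
  have hUtU : Uᵀ * U = 1 := by
    ext a a'
    have horth := orthonormal_iff_ite.mp b.orthonormal a a'
    simp only [Submodule.coe_inner] at horth
    have : inner ℝ ((b a : EuclideanSpace ℝ (Fin k))) ((b a' : EuclideanSpace ℝ (Fin k))) =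
        if a = a' then (1:ℝ) else 0 := horth
    rw [PiLp.inner_apply] at this
    simp only [RCLike.inner_apply, starRingEnd_apply, star_trivial] at this
    simpa [Matrix.mul_apply, Matrix.one_apply, U, mul_comm] using this
  refine ⟨fun i => Uᵀ * P i * U, fun j => Uᵀ * Q j * U, ?_, ?_, ?_⟩
  · intro i
    have := (hP i).conjTranspose_mul_mul_same U
    rwa [conjTranspose_eq_transpose_of_trivial] at this
  · intro j
    have := (hQ j).conjTranspose_mul_mul_same U
    rwa [conjTranspose_eq_transpose_of_trivial] at this
  · intro i j
    have key : (Uᵀ * P i * U) * (Uᵀ * Q j * U) = Uᵀ * (P i * Q j) * U := by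
      calc (Uᵀ * P i * U) * (Uᵀ * Q j * U)
          = Uᵀ * (P i * (U * Uᵀ) * Q j) * U := by simp only [Matrix.mul_assoc]
        _ = Uᵀ * (P i * Q j) * U := by rw [hPProj i]
    rw [key, Matrix.mul_assoc, Matrix.trace_mul_comm, Matrix.mul_assoc,
      Matrix.trace_mul_comm, ← Matrix.mul_assoc, hProjP i]

theorem psdRank_fromBlocks_ge {m₁ n₁ m₂ n₂ : ℕ}
    (A : Matrix (Fin m₁) (Fin n₁) ℝ) (B : Matrix (Fin m₁) (Fin n₂) ℝ)
    (C : Matrix (Fin m₂) (Fin n₂) ℝ)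
    (hA : ∀ i j, 0 ≤ A i j) (hB : ∀ i j, 0 ≤ B i j) (hC : ∀ i j, 0 ≤ C i j) :
    PsdRank A + PsdRank C ≤ PsdRank (Matrix.fromBlocks A B 0 C) := by
  classical
  set M := Matrix.fromBlocks A B 0 C with hMdef
  have hM0 : ∀ i j, 0 ≤ M i j := by
    rintro (i | i) (j | j) <;>
      simp [M, Matrix.fromBlocks_apply₁₁, Matrix.fromBlocks_apply₁₂,
        Matrix.fromBlocks_apply₂₁, Matrix.fromBlocks_apply₂₂] <;>
      first | exact hA i j | exact hB i j | exact hC i j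
  -- the defining set for `PsdRank M` is nonempty
  have hne : {k : ℕ | ∃ (P : (Fin m₁ ⊕ Fin m₂) → Matrix (Fin k) (Fin k) ℝ)
      (Q : (Fin n₁ ⊕ Fin n₂) → Matrix (Fin k) (Fin k) ℝ),
      (∀ i, (P i).PosSemidef) ∧ (∀ j, (Q j).PosSemidef) ∧
      ∀ i j, M i j = ((P i) * (Q j)).trace}.Nonempty := by
    refine ⟨m₁ + m₂, fun i => Matrix.diagonal (Pi.single (finSumFinEquiv i) 1),
      fun j => Matrix.diagonal (fun x => M (finSumFinEquiv.symm x) j), ?_, ?_, ?_⟩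
    · intro i
      refine Matrix.posSemidef_diagonal_iff.mpr fun x => ?_
      rcases eq_or_ne x (finSumFinEquiv i) with h | h <;> simp [h, Pi.single_apply]
    · intro j
      exact Matrix.posSemidef_diagonal_iff.mpr fun x => hM0 _ _
    · intro i j
      rw [Matrix.diagonal_mul_diagonal, Matrix.trace_diagonal]
      simp [Pi.single_apply, ite_mul]
  rw [PsdRank]
  refine le_csInf hne ?_
  rintro k ⟨P, Q, hP, hQ, hfac⟩
  -- the span of the ranges of the Q's corresponding to columns of A
  set V : Submodule ℝ (EuclideanSpace ℝ (Fin k)) :=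
    Submodule.span ℝ (⋃ j : Fin n₁, Set.range
      (fun y : Fin k → ℝ => (WithLp.toLp 2 ((Q (Sum.inl j)).mulVec y) : EuclideanSpace ℝ (Fin k)))) with hVdef
  have hQV : ∀ (j : Fin n₁) (y : Fin k → ℝ),
      (WithLp.toLp 2 ((Q (Sum.inl j)).mulVec y) : EuclideanSpace ℝ (Fin k)) ∈ V :=
    fun j y => Submodule.subset_span (Set.mem_iUnion.mpr ⟨j, ⟨y, rfl⟩⟩)
  have hPQ0 : ∀ (i : Fin m₂) (j : Fin n₁), P (Sum.inr i) * Q (Sum.inl j) = 0 := by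
    intro i j
    refine psd_mul_eq_zero_of_trace_eq_zero (hP _) (hQ _) ?_
    rw [← hfac]
    simp [M, Matrix.fromBlocks_apply₂₁]
  have hPker : ∀ (i : Fin m₂), ∀ x ∈ V, (P (Sum.inr i)) *ᵥ x = (0 : Fin k → ℝ) := by
    intro i x hx
    induction hx using Submodule.span_induction with
    | mem x hx =>
      obtain ⟨j, y, rfl⟩ := Set.mem_iUnion.mp hx
      rw [WithLp.ofLp_toLp, Matrix.mulVec_mulVec, hPQ0 i j, Matrix.zero_mulVec]
    | zero => exact Matrix.mulVec_zero _
    | add x y _ _ hx hy => rw [WithLp.ofLp_add, Matrix.mulVec_add, hx, hy, add_zero]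
    | smul c x _ hx => rw [WithLp.ofLp_smul, Matrix.mulVec_smul, hx, smul_zero]
  have hPperp : ∀ (i : Fin m₂) (y : Fin k → ℝ),
      (WithLp.toLp 2 ((P (Sum.inr i)).mulVec y) : EuclideanSpace ℝ (Fin k)) ∈ Vᗮ := by
    intro i y
    refine (Submodule.mem_orthogonal V (WithLp.toLp 2 ((P (Sum.inr i)).mulVec y))).mpr ?_
    intro u hu
    have hsym : (P (Sum.inr i))ᵀ = P (Sum.inr i) := by
      rw [← conjTranspose_eq_transpose_of_trivial]; exact (hP _).isHermitian
    have h0 : (P (Sum.inr i)) *ᵥ u = 0 := hPker i u hu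
    have : dotProduct u ((P (Sum.inr i)) *ᵥ y) = 0 := by
      rw [Matrix.dotProduct_mulVec, ← Matrix.mulVec_transpose, hsym, h0,
        zero_dotProduct]
    simpa [PiLp.inner_apply, RCLike.inner_apply, dotProduct, mul_comm] using this
  -- compress the A block onto V (with roles of rows/columns swapped)
  obtain ⟨Qc, Pc, hQc, hPc, htrA⟩ := compress (fun j => Q (Sum.inl j)) (fun i => P (Sum.inl i))
    (fun j => hQ _) (fun i => hP _) V (fun j y => hQV j y)
  -- compress the C block onto Vᗮ
  obtain ⟨Pc', Qc', hPc', hQc', htrC⟩ := compress (fun i => P (Sum.inr i)) (fun j => Q (Sum.inr j))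
    (fun i => hP _) (fun j => hQ _) Vᗮ (fun i y => hPperp i y)
  have hAle : PsdRank A ≤ Module.finrank ℝ V := by
    apply Nat.sInf_le
    refine ⟨fun i => Pc i, fun j => Qc j, hPc, hQc, fun i j => ?_⟩
    have : A i j = M (Sum.inl i) (Sum.inl j) := by simp [M, Matrix.fromBlocks_apply₁₁]
    rw [this, hfac, Matrix.trace_mul_comm, ← htrA j i, Matrix.trace_mul_comm]
  have hCle : PsdRank C ≤ Module.finrank ℝ Vᗮ := by
    apply Nat.sInf_le
    refine ⟨fun i => Pc' i, fun j => Qc' j, hPc', hQc', fun i j => ?_⟩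
    have : C i j = M (Sum.inr i) (Sum.inr j) := by simp [M, Matrix.fromBlocks_apply₂₂]
    rw [this, hfac, ← htrC i j]
  have hsum : Module.finrank ℝ V + Module.finrank ℝ Vᗮ = k := by
    rw [Submodule.finrank_add_finrank_orthogonal]
    simp [finrank_euclideanSpace_fin]
  exact hsum ▸ add_le_add hAle hCle
end

section
/- Let M be a nonnegative m×n matrix and suppose (A_i)_{i=1}^m and (B_j)_{j=1}^n are families of k×k real PSD matrices such that tr(A_i B_j) = M(i,j) for all i,j. Let d be the dimension of the linear span of all rows of all the matrices A_1,…,A_m. Then PSD rank(M) ≤ d. -/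
open Matrix

theorem psdRank_le_dim_span_rows {m n k : ℕ} (M : Matrix (Fin m) (Fin n) ℝ)
    (hM : ∀ i j, 0 ≤ M i j)
    (A : Fin m → Matrix (Fin k) (Fin k) ℝ) (B : Fin n → Matrix (Fin k) (Fin k) ℝ)
    (hA : ∀ i, (A i).PosSemidef) (hB : ∀ j, (B j).PosSemidef)
    (hfact : ∀ i j, M i j = ((A i) * (B j)).trace) :
    PsdRank M ≤ Module.finrank ℝ
      (Submodule.span ℝ {r : Fin k → ℝ | ∃ i t, r = (A i) t}) := by
  classical
  set S : Set (Fin k → ℝ) := {r : Fin k → ℝ | ∃ i t, r = (A i) t} with hSdef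
  set V : Submodule ℝ (Fin k → ℝ) := Submodule.span ℝ S with hVdef
  let e : (Fin k → ℝ) ≃ₗ[ℝ] EuclideanSpace ℝ (Fin k) := (WithLp.linearEquiv 2 ℝ (Fin k → ℝ)).symm
  let V' : Submodule ℝ (EuclideanSpace ℝ (Fin k)) := V.map e.toLinearMap
  have hdim : Module.finrank ℝ V' = Module.finrank ℝ V := LinearEquiv.finrank_map_eq e V
  set d := Module.finrank ℝ V' with hd
  let b : OrthonormalBasis (Fin d) ℝ V' := stdOrthonormalBasis ℝ V'
  let Q : Matrix (Fin k) (Fin d) ℝ := Matrix.of fun t l => (b l : EuclideanSpace ℝ (Fin k)) t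
  have hQ1 : Qᵀ * Q = 1 := by
    ext a c
    have horth := orthonormal_iff_ite.mp b.orthonormal a c
    simp only [Submodule.coe_inner, PiLp.inner_apply, RCLike.inner_apply, starRingEnd_apply,
      star_trivial] at horth
    simp [Matrix.mul_apply, Q, Matrix.one_apply, horth]
    rw [← horth]; exact Finset.sum_congr rfl fun _ _ => mul_comm _ _
  -- Q*Qᵀ fixes each basis vector
  have hfixb : ∀ l, (Q * Qᵀ) *ᵥ (fun t => (b l : EuclideanSpace ℝ (Fin k)) t) = fun t =>
      (b l : EuclideanSpace ℝ (Fin k)) t := by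
    intro l
    have hcol : (fun t => (b l : EuclideanSpace ℝ (Fin k)) t) = fun t => Q t l := rfl
    rw [hcol]
    funext t
    have : ((Q * Qᵀ) *ᵥ fun j => Q j l) t = ((Q * Qᵀ) * Q) t l := by
      simp [Matrix.mulVec, dotProduct, Matrix.mul_apply]
    rw [this, Matrix.mul_assoc, hQ1, Matrix.mul_one]
  -- Q*Qᵀ fixes every element of V
  have hfix : ∀ v ∈ V, (Q * Qᵀ) *ᵥ v = v := by
    intro v hv
    have hv' : e v ∈ V' := Submodule.mem_map_of_mem hv
    set x : V' := ⟨e v, hv'⟩ with hx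
    have hrep := b.sum_repr x
    have hrep' : (∑ l, b.repr x l • (b l : EuclideanSpace ℝ (Fin k))) = e v := by
      have := congrArg (Subtype.val) hrep
      simpa using this
    have hveq : v = ∑ l, b.repr x l • (fun t => (b l : EuclideanSpace ℝ (Fin k)) t) := by
      have : (e v : Fin k → ℝ) = v := rfl
      rw [← this, ← hrep']
      ext t; simp [Finset.sum_apply]
    rw [hveq, ← Matrix.mulVecLin_apply, map_sum]
    refine Finset.sum_congr rfl fun l _ => ?_
    rw [_root_.map_smul, Matrix.mulVecLin_apply, hfixb]
  -- symmetry of the A i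
  have hsym : ∀ i, (A i)ᵀ = A i := fun i => by
    have h2 : (A i)ᴴ = A i := (hA i).isHermitian
    rwa [conjTranspose_eq_transpose_of_trivial] at h2
  -- Q*Qᵀ * A i = A i
  have hfixA : ∀ i, (Q * Qᵀ) * A i = A i := by
    intro i
    ext t c
    have hcolmem : (fun j => A i j c) ∈ V := by
      have : (fun j => A i j c) = A i c := by
        funext j
        conv_lhs => rw [← hsym i]
        rfl
      rw [this]
      exact Submodule.subset_span ⟨i, c, rfl⟩
    have hcol := hfix _ hcolmem
    calc ((Q * Qᵀ) * A i) t c = ((Q * Qᵀ) *ᵥ fun j => A i j c) t := by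
          simp [Matrix.mulVec, dotProduct, Matrix.mul_apply]
      _ = A i t c := by rw [hcol]
  have hfixA' : ∀ i, A i * (Q * Qᵀ) = A i := by
    intro i
    have := congrArg Matrix.transpose (hfixA i)
    rwa [Matrix.transpose_mul, Matrix.transpose_mul, Matrix.transpose_transpose, hsym i] at this
  -- the compressed factorization
  have htrace : ∀ i j, ((Qᵀ * A i * Q) * (Qᵀ * B j * Q)).trace = (A i * B j).trace := by
    intro i j
    have h1 : (Qᵀ * A i * Q) * (Qᵀ * B j * Q) = Qᵀ * (A i * (B j * Q)) := by
      calc (Qᵀ * A i * Q) * (Qᵀ * B j * Q)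
          = Qᵀ * ((A i * (Q * Qᵀ)) * (B j * Q)) := by simp only [Matrix.mul_assoc]
        _ = Qᵀ * (A i * (B j * Q)) := by rw [hfixA' i]
    rw [h1, Matrix.trace_mul_comm]
    have h2 : A i * (B j * Q) * Qᵀ = (A i * B j) * (Q * Qᵀ) := by
      simp only [Matrix.mul_assoc]
    rw [h2, Matrix.trace_mul_comm, ← Matrix.mul_assoc, hfixA i]
  have hmemset : d ∈ {k : ℕ | ∃ (B' : Fin m → Matrix (Fin k) (Fin k) ℝ)
      (C : Fin n → Matrix (Fin k) (Fin k) ℝ),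
      (∀ i, (B' i).PosSemidef) ∧ (∀ j, (C j).PosSemidef) ∧
      ∀ i j, M i j = ((B' i) * (C j)).trace} := by
    refine ⟨fun i => Qᵀ * A i * Q, fun j => Qᵀ * B j * Q, ?_, ?_, ?_⟩
    · intro i
      have := (hA i).conjTranspose_mul_mul_same Q
      rwa [conjTranspose_eq_transpose_of_trivial] at this
    · intro j
      have := (hB j).conjTranspose_mul_mul_same Q
      rwa [conjTranspose_eq_transpose_of_trivial] at this
    · intro i j
      rw [hfact i j, htrace i j]
  calc PsdRank M ≤ d := Nat.sInf_le hmemset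
    _ = Module.finrank ℝ V := hdim
end

section
/- For every α ∈ [0,4], the 3×3 matrix P(α) = [[α,1,1],[1,1,0],[1,0,1]] has PSD rank exactly 2. -/
open Matrix

lemma psd2 (a b c : ℝ) (h : ∀ x y : ℝ, 0 ≤ a*x^2 + 2*b*x*y + c*y^2) :
    (!![a,b;b,c] : Matrix (Fin 2) (Fin 2) ℝ).PosSemidef := by
  refine Matrix.PosSemidef.of_dotProduct_mulVec_nonneg ?_ ?_
  · ext i j; fin_cases i <;> fin_cases j <;> simp [Matrix.conjTranspose_apply]
  · intro x
    have := h (x 0) (x 1)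
    simp [dotProduct, Matrix.mulVec, Fin.sum_univ_two]
    nlinarith [this]

theorem psdRank_P_eq_two (α : ℝ) (hα : α ∈ Set.Icc (0 : ℝ) 4) :
    PsdRank !![α, 1, 1; 1, 1, 0; 1, 0, 1] = 2 := by
  obtain ⟨h0, h4⟩ := hα
  have h2 : (2 : ℕ) ∈ {k : ℕ | ∃ (B : Fin 3 → Matrix (Fin k) (Fin k) ℝ)
      (C : Fin 3 → Matrix (Fin k) (Fin k) ℝ),
      (∀ i, (B i).PosSemidef) ∧ (∀ j, (C j).PosSemidef) ∧
      ∀ i j, !![α, 1, 1; 1, 1, 0; 1, 0, 1] i j = ((B i) * (C j)).trace} := by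
    refine ⟨![!![1, (α-2)/2; (α-2)/2, 1], !![1,0;0,0], !![0,0;0,1]],
            ![!![1,1;1,1], !![1,0;0,0], !![0,0;0,1]], ?_, ?_, ?_⟩
    · intro i
      fin_cases i
      · exact psd2 _ _ _ (fun x y => by nlinarith [sq_nonneg (x+y), sq_nonneg (x-y)])
      · exact psd2 _ _ _ (fun x y => by nlinarith [sq_nonneg x])
      · exact psd2 _ _ _ (fun x y => by nlinarith [sq_nonneg y])
    · intro j
      fin_cases j
      · exact psd2 _ _ _ (fun x y => by nlinarith [sq_nonneg (x+y)])
      · exact psd2 _ _ _ (fun x y => by nlinarith [sq_nonneg x])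
      · exact psd2 _ _ _ (fun x y => by nlinarith [sq_nonneg y])
    · intro i j
      fin_cases i <;> fin_cases j <;>
        simp [Matrix.trace_fin_two, Matrix.mul_apply, Fin.sum_univ_two, Matrix.vecHead, Matrix.vecTail] <;> ring_nf
  unfold PsdRank
  refine le_antisymm (Nat.sInf_le h2) (le_csInf ⟨2, h2⟩ ?_)
  rintro k ⟨B, C, hB, hC, h⟩
  by_contra hk
  push_neg at hk
  interval_cases k
  · have := h 0 1
    simp [Matrix.trace] at this
  · have e11 := h 1 1
    have e12 := h 1 2
    have e22 := h 2 2
    simp [Matrix.trace, Matrix.mul_apply, Fin.sum_univ_one] at e11 e12 e22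
    have hb1 : 0 ≤ B 1 0 0 := by
      have := (hB 1).dotProduct_mulVec_nonneg (fun _ => 1)
      simpa [dotProduct, Matrix.mulVec] using this
    have hc2 : 0 ≤ C 2 0 0 := by
      have := (hC 2).dotProduct_mulVec_nonneg (fun _ => 1)
      simpa [dotProduct, Matrix.mulVec] using this
    rcases e12 with h' | h'
    · rw [h'] at e11; simp at e11
    · rw [h'] at e22; simp at e22
end

section
/- If vectors u_1, u_2 ∈ ℝ^3 are not collinear and two rows of a matrix C (obtained as tr(A_i B) with B = u_1u_1^⊤ + u_2u_2^⊤ + u_3u_3^⊤) both vanish, then those two rows of C, as functions given by rank-one PSD factors supported on the 1-dimensional orthogonal complement of span(u_1,u_2), are proportional. -/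
open Matrix

private lemma trace_mul_vecMulVec (M : Matrix (Fin 3) (Fin 3) ℝ) (u : Fin 3 → ℝ) :
    (M * vecMulVec u u).trace = u ⬝ᵥ M *ᵥ u := by
  simp only [trace, diag_apply, mul_apply, vecMulVec_apply, dotProduct, mulVec,
    Finset.mul_sum]
  congr 1; ext i; congr 1; ext j; ring

private lemma vecMulVec_mulVec' (v x : Fin 3 → ℝ) :
    vecMulVec v v *ᵥ x = (v ⬝ᵥ x) • v := by
  funext i
  simp only [mulVec, vecMulVec_apply, dotProduct, Pi.smul_apply, smul_eq_mul,
    Finset.sum_mul, Finset.mul_sum]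
  congr 1; ext j; ring

theorem rows_vanishing_at_high_rank_column_are_collinear {m n : ℕ}
    (A : Fin m → Matrix (Fin 3) (Fin 3) ℝ) (B : Fin n → Matrix (Fin 3) (Fin 3) ℝ)
    (hA : ∀ i, (A i).PosSemidef) (hB : ∀ j, (B j).PosSemidef)
    (C : Matrix (Fin m) (Fin n) ℝ) (hC : ∀ i j, C i j = ((A i) * (B j)).trace)
    (k : Fin n) (u₁ u₂ u₃ v : Fin 3 → ℝ)
    (hBk : B k = vecMulVec u₁ u₁ + vecMulVec u₂ u₂ + vecMulVec u₃ u₃)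
    (hind : LinearIndependent ℝ ![u₁, u₂])
    (hv : v ≠ 0) (hv₁ : v ⬝ᵥ u₁ = 0) (hv₂ : v ⬝ᵥ u₂ = 0) :
    (∀ t, C t k = 0 → ∃ α : ℝ, 0 ≤ α ∧ A t = α • vecMulVec v v) ∧
    (∀ t₁ t₂, C t₁ k = 0 → C t₂ k = 0 →
      ∃ c d : ℝ, (c ≠ 0 ∨ d ≠ 0) ∧ ∀ j, c * C t₁ j = d * C t₂ j) := by
  have hvv : 0 < v ⬝ᵥ v := by
    have h0 : 0 ≤ v ⬝ᵥ v := Finset.sum_nonneg fun i _ => mul_self_nonneg (v i)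
    rcases h0.lt_or_eq with h | h
    · exact h
    · exact absurd (dotProduct_self_eq_zero.mp h.symm) hv
  -- linear independence of pair, explicit form
  rw [Fintype.linearIndependent_iff] at hind
  have hpair : ∀ a b : ℝ, a • u₁ + b • u₂ = 0 → a = 0 ∧ b = 0 := by
    intro a b hab
    have := hind ![a, b] (by simpa [Fin.sum_univ_two] using hab)
    exact ⟨this 0, this 1⟩
  -- u₁, u₂, v are linearly independent
  have hind3 : LinearIndependent ℝ ![u₁, u₂, v] := by
    rw [Fintype.linearIndependent_iff]
    intro g hg
    simp only [Fin.sum_univ_three, Matrix.cons_val_zero, Matrix.cons_val_one,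
      Matrix.head_cons, Matrix.cons_val_two, Matrix.tail_cons] at hg
    have hg2 : g 2 = 0 := by
      have h := congrArg (fun w => v ⬝ᵥ w) hg
      simp only [dotProduct_add, dotProduct_smul, hv₁, hv₂, smul_eq_mul,
        dotProduct_zero, mul_zero, add_zero, zero_add] at h
      exact (mul_eq_zero.mp h).resolve_right hvv.ne'
    rw [hg2, zero_smul, add_zero] at hg
    have := hpair (g 0) (g 1) (by simpa using hg)
    intro i; fin_cases i <;> simp [this.1, this.2, hg2]
  have hcard : Fintype.card (Fin 3) = Module.finrank ℝ (Fin 3 → ℝ) := by simp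
  let b : Module.Basis (Fin 3) ℝ (Fin 3 → ℝ) := basisOfLinearIndependentOfCardEqFinrank hind3 hcard
  have hb : ∀ i, b i = ![u₁, u₂, v] i := fun i => by
    simp [b, coe_basisOfLinearIndependentOfCardEqFinrank]
  -- Part 1
  have part1 : ∀ t, C t k = 0 → ∃ α : ℝ, 0 ≤ α ∧ A t = α • vecMulVec v v := by
    intro t ht
    have hPSD := hA t
    have hsym : (A t)ᵀ = A t := by
      have := hPSD.1
      rwa [Matrix.IsHermitian, conjTranspose_eq_transpose_of_trivial] at this
    rw [hC, hBk, mul_add, mul_add, trace_add, trace_add, trace_mul_vecMulVec,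
      trace_mul_vecMulVec, trace_mul_vecMulVec] at ht
    have nn1 := hPSD.dotProduct_mulVec_nonneg u₁
    have nn2 := hPSD.dotProduct_mulVec_nonneg u₂
    have nn3 := hPSD.dotProduct_mulVec_nonneg u₃
    simp only [star_trivial] at nn1 nn2 nn3
    have hq1 : u₁ ⬝ᵥ A t *ᵥ u₁ = 0 := by linarith
    have hq2 : u₂ ⬝ᵥ A t *ᵥ u₂ = 0 := by linarith
    have hu1 : A t *ᵥ u₁ = 0 := (hPSD.dotProduct_mulVec_zero_iff u₁).mp (by simpa using hq1)
    have hu2 : A t *ᵥ u₂ = 0 := (hPSD.dotProduct_mulVec_zero_iff u₂).mp (by simpa using hq2)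
    -- A t *ᵥ v is orthogonal to u₁ and u₂
    have hdot : ∀ u : Fin 3 → ℝ, A t *ᵥ u = 0 → u ⬝ᵥ (A t *ᵥ v) = 0 := by
      intro u hu
      rw [dotProduct_mulVec, ← hsym, vecMul_transpose, hu, zero_dotProduct]
    have hw1 : u₁ ⬝ᵥ (A t *ᵥ v) = 0 := hdot u₁ hu1
    have hw2 : u₂ ⬝ᵥ (A t *ᵥ v) = 0 := hdot u₂ hu2
    -- express A t *ᵥ v in the basis
    set w := A t *ᵥ v with hwdef
    have hrepr := b.sum_repr w
    rw [Fin.sum_univ_three, hb 0, hb 1, hb 2] at hrepr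
    simp only [Matrix.cons_val_zero, Matrix.cons_val_one, Matrix.head_cons,
      Matrix.cons_val_two, Matrix.tail_cons] at hrepr
    set a₀ := b.repr w 0
    set a₁ := b.repr w 1
    set a₂ := b.repr w 2
    -- dot the expression with u₁ and u₂
    have e1 : a₀ * (u₁ ⬝ᵥ u₁) + a₁ * (u₁ ⬝ᵥ u₂) = 0 := by
      have := congrArg (fun z => u₁ ⬝ᵥ z) hrepr
      simp only [dotProduct_add, dotProduct_smul, smul_eq_mul] at this
      rw [hw1, dotProduct_comm u₁ v, hv₁] at this
      linarith [this]
    have e2 : a₀ * (u₂ ⬝ᵥ u₁) + a₁ * (u₂ ⬝ᵥ u₂) = 0 := by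
      have := congrArg (fun z => u₂ ⬝ᵥ z) hrepr
      simp only [dotProduct_add, dotProduct_smul, smul_eq_mul] at this
      rw [hw2, dotProduct_comm u₂ v, hv₂] at this
      linarith [this]
    have hself : (a₀ • u₁ + a₁ • u₂) ⬝ᵥ (a₀ • u₁ + a₁ • u₂) = 0 := by
      simp only [dotProduct_add, add_dotProduct, dotProduct_smul, smul_dotProduct,
        smul_eq_mul]
      have hcomm : u₂ ⬝ᵥ u₁ = u₁ ⬝ᵥ u₂ := dotProduct_comm _ _
      rw [hcomm] at e2 ⊢
      linear_combination a₀ * e1 + a₁ * e2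
    have hzero : a₀ • u₁ + a₁ • u₂ = 0 := dotProduct_self_eq_zero.mp hself
    obtain ⟨ha₀, ha₁⟩ := hpair a₀ a₁ hzero
    rw [ha₀, ha₁, zero_smul, zero_smul, zero_add, zero_add] at hrepr
    -- so A t *ᵥ v = a₂ • v
    have ha₂nn : 0 ≤ a₂ := by
      have nnv := hPSD.dotProduct_mulVec_nonneg v
      simp only [star_trivial] at nnv
      rw [← hwdef, ← hrepr, dotProduct_smul, smul_eq_mul] at nnv
      have h := div_nonneg nnv hvv.le
      rwa [mul_div_cancel_right₀ _ hvv.ne'] at h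
    refine ⟨a₂ / (v ⬝ᵥ v), div_nonneg ha₂nn hvv.le, ?_⟩
    have key : ∀ u : Fin 3 → ℝ, (u = u₁ ∨ u = u₂ ∨ u = v) →
        A t *ᵥ u = (a₂ / (v ⬝ᵥ v)) • (v ⬝ᵥ u) • v := by
      rintro u (rfl | rfl | rfl)
      · rw [hu1, hv₁, zero_smul, smul_zero]
      · rw [hu2, hv₂, zero_smul, smul_zero]
      · rw [← hwdef, ← hrepr, smul_smul, div_mul_cancel₀ _ hvv.ne']
    apply Matrix.toLin'.injective
    refine b.ext fun i => ?_
    rw [Matrix.toLin'_apply, Matrix.toLin'_apply, smul_mulVec, vecMulVec_mulVec',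
      hb i]
    apply key
    fin_cases i <;> simp
  refine ⟨part1, ?_⟩
  intro t₁ t₂ h₁ h₂
  obtain ⟨α₁, hα₁, hA₁⟩ := part1 t₁ h₁
  obtain ⟨α₂, hα₂, hA₂⟩ := part1 t₂ h₂
  have hC₁ : ∀ j, C t₁ j = α₁ * (vecMulVec v v * B j).trace := by
    intro j; rw [hC, hA₁, smul_mul_assoc, trace_smul, smul_eq_mul]
  have hC₂ : ∀ j, C t₂ j = α₂ * (vecMulVec v v * B j).trace := by
    intro j; rw [hC, hA₂, smul_mul_assoc, trace_smul, smul_eq_mul]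
  by_cases hz : α₁ = 0
  · exact ⟨1, 0, Or.inl one_ne_zero, fun j => by rw [hC₁ j, hz]; ring⟩
  · exact ⟨α₂, α₁, Or.inr hz, fun j => by rw [hC₁ j, hC₂ j]; ring⟩
end
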